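/- Let 1 < q ≤ p < ∞ and suppose f ∈ L^{q'}(ℝⁿ) has compact support. Then there exist finitely many nonnegative numbers λ_1,…,λ_N and (p',q')-blocks b_1,…,b_N such that f = Σ_{j=1}^N λ_j b_j and Σ_{j=1}^N λ_j ≤ 8 ‖f‖_{B^{p'}_{q'}(ℝⁿ)}. -/

import Mathlib

open MeasureTheory ENNReal Set Filter

/-- The open axis-parallel cube with corner `a` and side length `s`. -/
noncomputable def cube (n : ℕ) (a : Fin n → ℝ) (s : ℝ) : Set (Fin n → ℝ) :=
  Set.univ.pi fun i => Set.Ioo (a i) (a i + s)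

/-- The Morrey norm `‖f‖_{M^p_q}` on `ℝⁿ`. -/
noncomputable def morreyNorm (n : ℕ) (p q : ℝ) (f : (Fin n → ℝ) → ℝ) : ℝ≥0∞ :=
  ⨆ (a : Fin n → ℝ) (s : ℝ) (_ : 0 < s),
    ENNReal.ofReal ((s ^ n) ^ (1 / p - 1 / q)) *
      (∫⁻ x in cube n a s, ENNReal.ofReal (|f x| ^ q)) ^ (1 / q)

/-- The Hölder conjugate exponent `p' = p/(p-1)`. -/
noncomputable def conjExp (p : ℝ) : ℝ := p / (p - 1)

/-- A `(p',q')`-block: a measurable function supported on a cube `Q` with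
`‖b‖_{L^{q'}} ≤ |Q|^{1/p-1/q}`. -/
def IsBlock (n : ℕ) (p q : ℝ) (b : (Fin n → ℝ) → ℝ) : Prop :=
  Measurable b ∧ ∃ (a : Fin n → ℝ) (s : ℝ), 0 < s ∧
    Function.support b ⊆ cube n a s ∧
    (∫⁻ x, ENNReal.ofReal (|b x| ^ conjExp q)) ^ (1 / conjExp q) ≤
      ENNReal.ofReal ((s ^ n) ^ (1 / p - 1 / q))

/-- `f = ∑ₖ λₖ bₖ` a.e. with absolutely convergent coefficients and `(p',q')`-blocks. -/
def IsBlockRep (n : ℕ) (p q : ℝ) (f : (Fin n → ℝ) → ℝ) (l : ℕ → ℝ)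
    (b : ℕ → (Fin n → ℝ) → ℝ) : Prop :=
  (∀ k, IsBlock n p q (b k)) ∧ Summable (fun k => |l k|) ∧
    ∀ᵐ x : Fin n → ℝ, Summable (fun k => l k * b k x) ∧ f x = ∑' k, l k * b k x

/-- Membership in the block space `B^{p'}_{q'}(ℝⁿ)`. -/
def MemBlockSpace (n : ℕ) (p q : ℝ) (f : (Fin n → ℝ) → ℝ) : Prop :=
  ∃ l b, IsBlockRep n p q f l b

/-- The block space norm `‖f‖_{B^{p'}_{q'}}`: infimal `ℓ¹`-sum of coefficients. -/
noncomputable def blockNorm (n : ℕ) (p q : ℝ) (f : (Fin n → ℝ) → ℝ) : ℝ≥0∞ :=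
  ⨅ (l : ℕ → ℝ) (b : ℕ → (Fin n → ℝ) → ℝ) (_ : IsBlockRep n p q f l b),
    ENNReal.ofReal (∑' k, |l k|)

open Topology

section Aux

variable {n : ℕ} {p q : ℝ}

lemma hconj (hq : 1 < q) : (conjExp q).HolderConjugate q :=
  (Real.HolderConjugate.conjExponent hq).symm

lemma conjExp_pos (hq : 1 < q) : 0 < conjExp q := (hconj hq).pos

lemma cube_measurableSet (n : ℕ) (a : Fin n → ℝ) (s : ℝ) : MeasurableSet (cube n a s) :=
  MeasurableSet.univ_pi fun _ => measurableSet_Ioo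

lemma volume_cube (n : ℕ) (a : Fin n → ℝ) (s : ℝ) (hs : 0 ≤ s) :
    volume (cube n a s) = ENNReal.ofReal (s ^ n) := by
  rw [cube, volume_pi_pi]
  have h : ∀ i : Fin n, volume (Set.Ioo (a i) (a i + s)) = ENNReal.ofReal s := by
    intro i; rw [Real.volume_Ioo, add_sub_cancel_left]
  rw [Finset.prod_congr rfl (fun i _ => h i), Finset.prod_const, Finset.card_univ,
    Fintype.card_fin, ← ENNReal.ofReal_pow hs]

lemma meas_ofReal_abs_rpow {α : Type*} [MeasurableSpace α] {g : α → ℝ} (hg : Measurable g)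
    (r : ℝ) (hr : 0 ≤ r) : Measurable fun x => ENNReal.ofReal (|g x| ^ r) :=
  (((Real.continuous_rpow_const hr).measurable.comp hg.abs)).ennreal_ofReal

/-- Scaling a compactly (cube-)supported `L^{q'}` function to a block. -/
lemma blockScale (n : ℕ) (p q : ℝ) (hq : 1 < q) (g : (Fin n → ℝ) → ℝ) (hg : Measurable g)
    (a : Fin n → ℝ) (s : ℝ) (hs : 0 < s) (hsupp : Function.support g ⊆ cube n a s)
    (hI : (∫⁻ x, ENNReal.ofReal (|g x| ^ conjExp q)) ≠ ⊤) :
    ∃ (μ : ℝ) (c : (Fin n → ℝ) → ℝ), 0 ≤ μ ∧ IsBlock n p q c ∧ (∀ᵐ x, g x = μ * c x) ∧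
      ENNReal.ofReal μ ≤ (∫⁻ x, ENNReal.ofReal (|g x| ^ conjExp q)) ^ (1 / conjExp q) *
        ENNReal.ofReal ((s ^ n) ^ (1 / q - 1 / p)) := by
  have hqc : 0 < conjExp q := conjExp_pos hq
  by_cases hI0 : (∫⁻ x, ENNReal.ofReal (|g x| ^ conjExp q)) = 0
  · have hg0 : ∀ᵐ x, g x = 0 := by
      have h := (lintegral_eq_zero_iff (meas_ofReal_abs_rpow hg _ hqc.le)).mp hI0
      filter_upwards [h] with x hx
      by_contra hgx
      have h1 : 0 < |g x| ^ conjExp q := Real.rpow_pos_of_pos (abs_pos.mpr hgx) _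
      exact absurd hx (ne_of_gt (ENNReal.ofReal_pos.mpr h1))
    refine ⟨0, fun _ => 0, le_refl 0, ?_, ?_, ?_⟩
    · refine ⟨measurable_const, a, s, hs, by simp [Function.support], ?_⟩
      have : (∫⁻ _x : Fin n → ℝ, ENNReal.ofReal (|(0:ℝ)| ^ conjExp q)) = 0 := by
        simp [Real.zero_rpow (ne_of_gt hqc)]
      rw [this, ENNReal.zero_rpow_of_pos (by positivity)]
      exact zero_le
    · filter_upwards [hg0] with x hx; simp [hx]
    · simp
  · set d : ℝ := (s ^ n) ^ ((1:ℝ) / p - 1 / q) with hd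
    have hsn : 0 < (s:ℝ) ^ n := pow_pos hs n
    have hd0 : 0 < d := Real.rpow_pos_of_pos hsn _
    have hJtop : (∫⁻ x, ENNReal.ofReal (|g x| ^ conjExp q)) ^ (1 / conjExp q) ≠ ⊤ :=
      ENNReal.rpow_ne_top_of_nonneg (by positivity) hI
    have hJ0 : (∫⁻ x, ENNReal.ofReal (|g x| ^ conjExp q)) ^ (1 / conjExp q) ≠ 0 := by
      simp only [ne_eq, ENNReal.rpow_eq_zero_iff, not_or]
      constructor
      · rintro ⟨h, -⟩; exact hI0 h
      · rintro ⟨h, -⟩; exact hI h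
    set j : ℝ := ((∫⁻ x, ENNReal.ofReal (|g x| ^ conjExp q)) ^ (1 / conjExp q)).toReal with hj
    have hjpos : 0 < j := ENNReal.toReal_pos hJ0 hJtop
    have hJeq : (∫⁻ x, ENNReal.ofReal (|g x| ^ conjExp q)) ^ (1 / conjExp q)
        = ENNReal.ofReal j := (ENNReal.ofReal_toReal hJtop).symm
    refine ⟨j / d, fun x => (d / j) * g x, by positivity, ?_, ?_, ?_⟩
    · refine ⟨hg.const_mul _, a, s, hs, ?_, ?_⟩
      · intro x hx
        exact hsupp (right_ne_zero_of_mul hx)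
      · have hcalc : ∀ x : Fin n → ℝ, ENNReal.ofReal (|(d / j) * g x| ^ conjExp q)
            = ENNReal.ofReal ((d / j) ^ conjExp q) * ENNReal.ofReal (|g x| ^ conjExp q) := by
          intro x
          rw [abs_mul, abs_of_pos (by positivity : (0:ℝ) < d / j),
            Real.mul_rpow (by positivity) (abs_nonneg _), ENNReal.ofReal_mul (by positivity)]
        calc (∫⁻ x, ENNReal.ofReal (|(d / j) * g x| ^ conjExp q)) ^ (1 / conjExp q)
            = (ENNReal.ofReal ((d / j) ^ conjExp q) *
                ∫⁻ x, ENNReal.ofReal (|g x| ^ conjExp q)) ^ (1 / conjExp q) := by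
              rw [← lintegral_const_mul _ (meas_ofReal_abs_rpow hg _ hqc.le)]
              congr 1
              exact lintegral_congr hcalc
          _ = ENNReal.ofReal ((d / j) ^ conjExp q) ^ (1 / conjExp q) *
                (∫⁻ x, ENNReal.ofReal (|g x| ^ conjExp q)) ^ (1 / conjExp q) :=
              ENNReal.mul_rpow_of_nonneg _ _ (by positivity)
          _ = ENNReal.ofReal (d / j) * ENNReal.ofReal j := by
              rw [hJeq, ← ENNReal.ofReal_rpow_of_pos (by positivity : (0:ℝ) < d / j),
                ← ENNReal.rpow_mul, mul_one_div, div_self (ne_of_gt hqc), ENNReal.rpow_one]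
          _ = ENNReal.ofReal ((s ^ n) ^ ((1:ℝ) / p - 1 / q)) := by
              rw [← ENNReal.ofReal_mul (by positivity), div_mul_cancel₀ _ (ne_of_gt hjpos), hd]
          _ ≤ ENNReal.ofReal ((s ^ n) ^ (1 / p - 1 / q)) := le_refl _
    · refine Filter.Eventually.of_forall (fun x => ?_)
      field_simp
    · have h1 : (s ^ n : ℝ) ^ ((1:ℝ) / q - 1 / p) = d⁻¹ := by
        rw [hd, ← Real.rpow_neg (le_of_lt hsn)]
        congr 1; ring
      rw [h1, div_eq_mul_inv, ENNReal.ofReal_mul (le_of_lt hjpos), hJeq]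

/-- Hölder bound for the set integral of a block over a set of finite measure. -/
lemma block_setLIntegral (n : ℕ) (p q : ℝ) (hq : 1 < q) (hqp : q ≤ p)
    {b : (Fin n → ℝ) → ℝ} (hb : IsBlock n p q b) {E : Set (Fin n → ℝ)} (hE : MeasurableSet E)
    {e : ℝ} (he : 0 < e) (hvol : volume E ≤ ENNReal.ofReal e) :
    ∫⁻ x in E, ENNReal.ofReal |b x| ≤ ENNReal.ofReal (e ^ ((1:ℝ)/p)) := by
  obtain ⟨hbm, a, s, hs, hsupp, hnorm⟩ := hb
  have hp1 : 1 < p := lt_of_lt_of_le hq hqp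
  have hq0 : 0 < q := by linarith
  have hp0 : 0 < p := by linarith
  have hqc : 0 < conjExp q := conjExp_pos hq
  have hQm : MeasurableSet (cube n a s) := cube_measurableSet n a s
  set Q := cube n a s with hQ
  have key : (∫⁻ x in E, ENNReal.ofReal |b x|)
      = ∫⁻ x, (fun y => ENNReal.ofReal |b y|) x * (E ∩ Q).indicator (fun _ => 1) x := by
    rw [← lintegral_indicator hE]
    congr 1; funext x
    by_cases hxE : x ∈ E
    · by_cases hxQ : x ∈ Q
      · simp [Set.indicator_of_mem, hxE, Set.mem_inter hxE hxQ]
      · have hb0 : b x = 0 := by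
          by_contra h; exact hxQ (hsupp h)
        have hxEQ : x ∉ E ∩ Q := fun h => hxQ h.2
        simp [hb0, hxE, hxEQ]
    · have hxEQ : x ∉ E ∩ Q := fun h => hxE h.1
      simp [hxE, hxEQ]
  have hmeasg : Measurable ((E ∩ Q).indicator (fun _ => (1:ℝ≥0∞))) :=
    measurable_const.indicator (hE.inter hQm)
  have holder := ENNReal.lintegral_mul_le_Lp_mul_Lq volume (hconj hq)
    (f := fun y => ENNReal.ofReal |b y|) (g := (E ∩ Q).indicator (fun _ => 1))
    (hbm.abs.ennreal_ofReal).aemeasurable hmeasg.aemeasurable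
  have hfq : (∫⁻ x, (fun y => ENNReal.ofReal |b y|) x ^ conjExp q) ^ (1 / conjExp q)
      ≤ ENNReal.ofReal ((s ^ n) ^ (1 / p - 1 / q)) := by
    calc (∫⁻ x, ENNReal.ofReal |b x| ^ conjExp q) ^ (1 / conjExp q)
        = (∫⁻ x, ENNReal.ofReal (|b x| ^ conjExp q)) ^ (1 / conjExp q) := by
          congr 1; exact lintegral_congr fun x =>
            ENNReal.ofReal_rpow_of_nonneg (abs_nonneg _) hqc.le
      _ ≤ _ := hnorm
  have hgq : (∫⁻ x, ((E ∩ Q).indicator (fun _ => (1:ℝ≥0∞))) x ^ q) ^ ((1:ℝ) / q)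
      = (volume (E ∩ Q)) ^ ((1:ℝ)/q) := by
    congr 1
    have : ∀ x, ((E ∩ Q).indicator (fun _ => (1:ℝ≥0∞))) x ^ q
        = ((E ∩ Q).indicator (fun _ => (1:ℝ≥0∞))) x := by
      intro x
      by_cases hx : x ∈ E ∩ Q
      · simp [hx]
      · simp [hx, ENNReal.zero_rpow_of_pos hq0]
    rw [lintegral_congr this, lintegral_indicator (hE.inter hQm)]
    simp
  have hVE : volume (E ∩ Q) ≤ ENNReal.ofReal e :=
    le_trans (measure_mono Set.inter_subset_left) hvol
  have hVQ : volume (E ∩ Q) ≤ ENNReal.ofReal (s ^ n) := by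
    refine le_trans (measure_mono Set.inter_subset_right) ?_
    rw [hQ, volume_cube n a s hs.le]
  have hsn : (0:ℝ) < s ^ n := pow_pos hs n
  have hfinal : ENNReal.ofReal ((s ^ n) ^ (1 / p - 1 / q)) * (volume (E ∩ Q)) ^ ((1:ℝ)/q)
      ≤ ENNReal.ofReal (e ^ ((1:ℝ)/p)) := by
    rcases le_or_gt (s ^ n : ℝ) e with ht | ht
    · calc ENNReal.ofReal ((s ^ n) ^ (1 / p - 1 / q)) * (volume (E ∩ Q)) ^ ((1:ℝ)/q)
          ≤ ENNReal.ofReal ((s ^ n) ^ (1 / p - 1 / q)) *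
            (ENNReal.ofReal (s ^ n)) ^ ((1:ℝ)/q) :=
            mul_le_mul_right (ENNReal.rpow_le_rpow hVQ (by positivity)) _
        _ = ENNReal.ofReal ((s ^ n) ^ ((1:ℝ)/p - 1/q) * (s ^ n) ^ ((1:ℝ)/q)) := by
            rw [ENNReal.ofReal_rpow_of_nonneg hsn.le (by positivity), ← ENNReal.ofReal_mul
              (by positivity)]
        _ = ENNReal.ofReal ((s ^ n) ^ ((1:ℝ)/p)) := by
            rw [← Real.rpow_add hsn]; norm_num
        _ ≤ ENNReal.ofReal (e ^ ((1:ℝ)/p)) :=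
            ENNReal.ofReal_le_ofReal (Real.rpow_le_rpow hsn.le ht (by positivity))
    · have hexp : (1:ℝ)/p - 1/q ≤ 0 := by
        have := one_div_le_one_div_of_le hq0 hqp
        linarith
      calc ENNReal.ofReal ((s ^ n) ^ (1 / p - 1 / q)) * (volume (E ∩ Q)) ^ ((1:ℝ)/q)
          ≤ ENNReal.ofReal (e ^ ((1:ℝ)/p - 1/q)) * (ENNReal.ofReal e) ^ ((1:ℝ)/q) := by
            refine mul_le_mul' (ENNReal.ofReal_le_ofReal ?_)
              (ENNReal.rpow_le_rpow hVE (by positivity))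
            exact Real.rpow_le_rpow_of_nonpos he ht.le hexp
        _ = ENNReal.ofReal (e ^ ((1:ℝ)/p - 1/q) * e ^ ((1:ℝ)/q)) := by
            rw [ENNReal.ofReal_rpow_of_nonneg he.le (by positivity),
              ← ENNReal.ofReal_mul (by positivity)]
        _ = ENNReal.ofReal (e ^ ((1:ℝ)/p)) := by
            rw [← Real.rpow_add he]; norm_num
  calc ∫⁻ x in E, ENNReal.ofReal |b x|
      = ∫⁻ x, (fun y => ENNReal.ofReal |b y|) x * (E ∩ Q).indicator (fun _ => 1) x := key
    _ ≤ _ := holder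
    _ ≤ ENNReal.ofReal ((s ^ n) ^ (1 / p - 1 / q)) * (volume (E ∩ Q)) ^ ((1:ℝ)/q) := by
        rw [hgq]; exact mul_le_mul_left hfq _
    _ ≤ ENNReal.ofReal (e ^ ((1:ℝ)/p)) := hfinal

end Aux

section Aux2

variable {n : ℕ} {p q : ℝ}

lemma lintegral_abs_eq_setLIntegral {g : (Fin n → ℝ) → ℝ} {E : Set (Fin n → ℝ)}
    (hE : MeasurableSet E) (h : Function.support g ⊆ E) :
    (∫⁻ x, ENNReal.ofReal |g x|) = ∫⁻ x in E, ENNReal.ofReal |g x| := by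
  rw [← lintegral_indicator hE]
  refine lintegral_congr fun x => ?_
  by_cases hx : x ∈ E
  · simp [hx]
  · have : g x = 0 := by
      by_contra hgx; exact hx (h hgx)
    simp [this, hx]

/-- A sign-flipped restriction of a block is a block. -/
lemma IsBlock.indicator_sign (hq : 1 < q) {b : (Fin n → ℝ) → ℝ} (hb : IsBlock n p q b)
    (S : Set (Fin n → ℝ)) (hS : MeasurableSet S) (σ : ℝ) (hσ : |σ| ≤ 1) :
    IsBlock n p q (S.indicator fun x => σ * b x) := by
  obtain ⟨hbm, a, s, hs, hsupp, hnorm⟩ := hb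
  have hqc : 0 < conjExp q := conjExp_pos hq
  refine ⟨(hbm.const_mul σ).indicator hS, a, s, hs, ?_, le_trans ?_ hnorm⟩
  · intro x hx
    rw [Function.mem_support] at hx
    have hx' : σ * b x ≠ 0 := by
      by_cases hmem : x ∈ S
      · rwa [Set.indicator_of_mem hmem] at hx
      · rw [Set.indicator_of_notMem hmem] at hx
        exact absurd rfl hx
    exact hsupp (right_ne_zero_of_mul hx')
  · refine ENNReal.rpow_le_rpow (lintegral_mono fun x => ?_) (by positivity)
    refine ENNReal.ofReal_le_ofReal (Real.rpow_le_rpow (abs_nonneg _) ?_ hqc.le)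
    by_cases hx : x ∈ S
    · rw [Set.indicator_of_mem hx, abs_mul]
      exact mul_le_of_le_one_left (abs_nonneg _) hσ
    · rw [Set.indicator_of_notMem hx, abs_zero]
      exact abs_nonneg _

/-- If the block norm vanishes, the function vanishes a.e. -/
lemma ae_zero_of_blockNorm_zero (n : ℕ) (p q : ℝ) (hq : 1 < q) (hqp : q ≤ p)
    {f : (Fin n → ℝ) → ℝ} (hf : Measurable f) {a₀ : Fin n → ℝ} {s₀ : ℝ} (hs₀ : 0 < s₀)
    (hsupp : Function.support f ⊆ cube n a₀ s₀) (h0 : blockNorm n p q f = 0) :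
    ∀ᵐ x : Fin n → ℝ, f x = 0 := by
  have hp1 : 1 < p := lt_of_lt_of_le hq hqp
  set E := cube n a₀ s₀ with hEdef
  have hE : MeasurableSet E := cube_measurableSet n a₀ s₀
  have he0 : (0:ℝ) < s₀ ^ n := pow_pos hs₀ n
  have hvol : volume E ≤ ENNReal.ofReal (s₀ ^ n) := le_of_eq (volume_cube n a₀ s₀ hs₀.le)
  set C : ℝ≥0∞ := ENNReal.ofReal ((s₀ ^ n) ^ ((1:ℝ)/p)) with hCdef
  have hC0 : C ≠ 0 := by
    simp only [hCdef, ne_eq, ENNReal.ofReal_eq_zero, not_le]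
    positivity
  have hCtop : C ≠ ⊤ := ENNReal.ofReal_ne_top
  -- key bound for any representation
  have key : ∀ (l : ℕ → ℝ) (b : ℕ → (Fin n → ℝ) → ℝ), IsBlockRep n p q f l b →
      (∫⁻ x in E, ENNReal.ofReal |f x|) ≤ C * ENNReal.ofReal (∑' k, |l k|) := by
    rintro l b ⟨hblocks, hsum, hae⟩
    have hmeask : ∀ k : ℕ, Measurable fun x => ENNReal.ofReal |l k * b k x| :=
      fun k => ((hblocks k).1.const_mul _).abs.ennreal_ofReal
    have step1 : (∫⁻ x in E, ENNReal.ofReal |f x|)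
        ≤ ∫⁻ x in E, ∑' k, ENNReal.ofReal |l k * b k x| := by
      refine lintegral_mono_ae ?_
      filter_upwards [ae_restrict_of_ae hae] with x hx
      obtain ⟨hsumx, hfx⟩ := hx
      have habs : Summable fun k => |l k * b k x| := summable_abs_iff.mpr hsumx
      calc ENNReal.ofReal |f x| = ENNReal.ofReal |∑' k, l k * b k x| := by rw [hfx]
        _ ≤ ENNReal.ofReal (∑' k, |l k * b k x|) := by
            refine ENNReal.ofReal_le_ofReal ?_
            have h := norm_tsum_le_tsum_norm (f := fun k => l k * b k x)
              (by simpa only [Real.norm_eq_abs] using habs)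
            simpa only [Real.norm_eq_abs] using h
        _ = ∑' k, ENNReal.ofReal |l k * b k x| :=
            ENNReal.ofReal_tsum_of_nonneg (fun _ => abs_nonneg _) habs
    have step2 : (∫⁻ x in E, ∑' k, ENNReal.ofReal |l k * b k x|)
        = ∑' k, ∫⁻ x in E, ENNReal.ofReal |l k * b k x| :=
      lintegral_tsum fun k => (hmeask k).aemeasurable
    have step3 : ∀ k : ℕ, (∫⁻ x in E, ENNReal.ofReal |l k * b k x|)
        ≤ ENNReal.ofReal |l k| * C := by
      intro k
      have : ∀ x, ENNReal.ofReal |l k * b k x|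
          = ENNReal.ofReal |l k| * ENNReal.ofReal |b k x| := by
        intro x; rw [abs_mul, ENNReal.ofReal_mul (abs_nonneg _)]
      rw [lintegral_congr this, lintegral_const_mul _ (hblocks k).1.abs.ennreal_ofReal]
      exact mul_le_mul_right (block_setLIntegral n p q hq hqp (hblocks k) hE he0 hvol) _
    calc (∫⁻ x in E, ENNReal.ofReal |f x|)
        ≤ ∑' k, ∫⁻ x in E, ENNReal.ofReal |l k * b k x| := step1.trans (le_of_eq step2)
      _ ≤ ∑' k, ENNReal.ofReal |l k| * C := ENNReal.tsum_le_tsum step3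
      _ = (∑' k, ENNReal.ofReal |l k|) * C := ENNReal.tsum_mul_right
      _ = C * ENNReal.ofReal (∑' k, |l k|) := by
          rw [← ENNReal.ofReal_tsum_of_nonneg (fun _ => abs_nonneg _) hsum, mul_comm]
  -- extract representations with small coefficient sums
  have hrep_small : ∀ ε : ℝ≥0∞, 0 < ε →
      ∃ (l : ℕ → ℝ) (b : ℕ → (Fin n → ℝ) → ℝ), IsBlockRep n p q f l b ∧
        ENNReal.ofReal (∑' k, |l k|) < ε := by
    intro ε hε
    have : blockNorm n p q f < ε := by rw [h0]; exact hε
    obtain ⟨l, hl⟩ := iInf_lt_iff.mp this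
    obtain ⟨b, hb⟩ := iInf_lt_iff.mp hl
    obtain ⟨hrep, hval⟩ := iInf_lt_iff.mp hb
    exact ⟨l, b, hrep, hval⟩
  set X : ℝ≥0∞ := ∫⁻ x in E, ENNReal.ofReal |f x| with hX
  have hXtop : X ≠ ⊤ := by
    obtain ⟨l, b, hrep, hval⟩ := hrep_small 1 one_pos
    refine ne_top_of_le_ne_top ?_ (key l b hrep)
    exact ENNReal.mul_ne_top hCtop ENNReal.ofReal_ne_top
  have hX0 : X = 0 := by
    by_contra hX0
    have hXpos : 0 < X := pos_iff_ne_zero.mpr hX0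
    have hhalf : X / 2 < X := ENNReal.half_lt_self hX0 hXtop
    have hε : 0 < X / 2 / C := ENNReal.div_pos (by
      simp only [ne_eq, ENNReal.div_eq_zero_iff]
      push_neg
      exact ⟨hX0, ENNReal.ofNat_ne_top⟩) hCtop
    obtain ⟨l, b, hrep, hval⟩ := hrep_small _ hε
    have : X ≤ C * (X / 2 / C) := le_trans (key l b hrep) (mul_le_mul_right hval.le _)
    rw [ENNReal.mul_div_cancel hC0 hCtop] at this
    exact absurd (lt_of_le_of_lt this hhalf) (lt_irrefl X)
  have htotal : (∫⁻ x, ENNReal.ofReal |f x|) = 0 := by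
    rw [lintegral_abs_eq_setLIntegral hE hsupp]
    exact hX0
  have := (lintegral_eq_zero_iff hf.abs.ennreal_ofReal).mp htotal
  filter_upwards [this] with x hx
  have : |f x| ≤ 0 := ENNReal.ofReal_eq_zero.mp hx
  exact abs_eq_zero.mp (le_antisymm this (abs_nonneg _))

end Aux2

/-- a compactly supported f ∈ L^{q'}(ℝⁿ) admits a finite decomposition
into (p',q')-blocks with coefficient sum at most 8 ‖f‖_{B^{p'}_{q'}}. -/
theorem stmt19 (n : ℕ) (p q : ℝ) (hq : 1 < q) (hqp : q ≤ p)
    (f : (Fin n → ℝ) → ℝ) (hf : Measurable f) (hsupp : HasCompactSupport f)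
    (hLq : (∫⁻ x, ENNReal.ofReal (|f x| ^ conjExp q)) < ⊤) :
    ∃ (N : ℕ) (l : Fin N → ℝ) (b : Fin N → (Fin n → ℝ) → ℝ),
      (∀ j, 0 ≤ l j ∧ IsBlock n p q (b j)) ∧
      (∀ᵐ x : Fin n → ℝ, f x = ∑ j, l j * b j x) ∧
      ENNReal.ofReal (∑ j, l j) ≤ 8 * blockNorm n p q f := by
  have hp1 : 1 < p := lt_of_lt_of_le hq hqp
  have hq0 : 0 < q := by linarith
  have hqc : 0 < conjExp q := conjExp_pos hq
  -- a big cube containing the support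
  obtain ⟨a₀, s₀, hs₀, hFsub⟩ :
      ∃ (a₀ : Fin n → ℝ) (s₀ : ℝ), 0 < s₀ ∧ tsupport f ⊆ cube n a₀ s₀ := by
    obtain ⟨R, hR⟩ := hsupp.isBounded.subset_closedBall 0
    set R' : ℝ := max R 0 with hR'
    refine ⟨fun _ => -(R' + 1), 2 * R' + 2, by positivity, ?_⟩
    intro x hx
    have hx' : ‖x‖ ≤ R := by
      have := hR hx
      rwa [Metric.mem_closedBall, dist_zero_right] at this
    rw [cube, Set.mem_univ_pi]
    intro i
    have h1 : |x i| ≤ ‖x‖ := by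
      simpa [Real.norm_eq_abs] using norm_le_pi_norm x i
    have h2 : |x i| ≤ R' := le_trans (h1.trans hx') (le_max_left _ _)
    have h3 := abs_le.mp h2
    rw [Set.mem_Ioo]
    constructor <;> nlinarith [h3.1, h3.2]
  have hsuppf : Function.support f ⊆ cube n a₀ s₀ := (subset_tsupport f).trans hFsub
  set F := tsupport f with hFdef
  have hFmeas : MeasurableSet F := (isClosed_tsupport f).measurableSet
  have hFvol : volume F ≠ ⊤ := hsupp.measure_lt_top.ne
  by_cases hν0 : blockNorm n p q f = 0
  · have hf0 := ae_zero_of_blockNorm_zero n p q hq hqp hf hs₀ hsuppf hν0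
    refine ⟨0, fun j => j.elim0, fun j => j.elim0, fun j => j.elim0, ?_, ?_⟩
    · filter_upwards [hf0] with x hx
      simp [hx]
    · simp
  by_cases hνtop : blockNorm n p q f = ⊤
  · obtain ⟨μ, c, hμ0, hblk, haeq, -⟩ :=
      blockScale n p q hq f hf a₀ s₀ hs₀ hsuppf hLq.ne
    refine ⟨1, fun _ => μ, fun _ => c, fun _ => ⟨hμ0, hblk⟩, ?_, ?_⟩
    · filter_upwards [haeq] with x hx
      simpa using hx
    · rw [hνtop, ENNReal.mul_top (by norm_num)]
      exact le_top
  -- main case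
  have hνpos : 0 < blockNorm n p q f := pos_iff_ne_zero.mpr hν0
  have hlt : blockNorm n p q f < 2 * blockNorm n p q f := by
    have h := ENNReal.lt_add_right hνtop hν0
    rwa [← two_mul] at h
  obtain ⟨l, hl1⟩ := iInf_lt_iff.mp hlt
  obtain ⟨b, hl2⟩ := iInf_lt_iff.mp hl1
  obtain ⟨hrep, hval⟩ := iInf_lt_iff.mp hl2
  obtain ⟨hblocks, hsum, hae⟩ := hrep
  -- the tails
  set G : ℕ → (Fin n → ℝ) → ℝ≥0∞ :=
    fun K x => ∑' k, ENNReal.ofReal |l (k + K) * b (k + K) x| with hGdef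
  have hGmeas : ∀ K, Measurable (G K) :=
    fun K => Measurable.ennreal_tsum fun k =>
      ((hblocks (k + K)).1.const_mul _).abs.ennreal_ofReal
  set g : ℕ → (Fin n → ℝ) → ℝ :=
    fun K x => f x - ∑ k ∈ Finset.range K, l k * b k x with hgdef
  have hgmeas : ∀ K, Measurable (g K) :=
    fun K => hf.sub (Finset.measurable_sum _ fun k _ => (hblocks k).1.const_mul (l k))
  have hA : ∀ᵐ x : Fin n → ℝ,
      (∀ K, ENNReal.ofReal |g K x| ≤ G K x) ∧ (∀ K, G K x ≠ ⊤) ∧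
        Tendsto (fun K => G K x) atTop (𝓝 0) := by
    filter_upwards [hae] with x hx
    obtain ⟨hsx, hfx⟩ := hx
    have habs : Summable fun k => |l k * b k x| := summable_abs_iff.mpr hsx
    have htail : ∀ K : ℕ, Summable fun k => |l (k + K) * b (k + K) x| :=
      fun K => (summable_nat_add_iff (f := fun m => |l m * b m x|) K).mpr habs
    have hGeq : ∀ K, G K x = ENNReal.ofReal (∑' k, |l (k + K) * b (k + K) x|) :=
      fun K => (ENNReal.ofReal_tsum_of_nonneg (fun _ => abs_nonneg _) (htail K)).symm
    refine ⟨?_, fun K => by rw [hGeq K]; exact ENNReal.ofReal_ne_top, ?_⟩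
    · intro K
      have hts : g K x = ∑' k, l (k + K) * b (k + K) x := by
        have h := Summable.sum_add_tsum_nat_add (f := fun k => l k * b k x) K hsx
        have h2 : (∑' (i : ℕ), l (i + K) * b (i + K) x)
            = ∑' (i : ℕ), l (i + K) * b (i + K) x := rfl
        rw [hgdef]
        simp only []
        rw [hfx, ← h]
        ring
      rw [hts, hGeq K]
      refine ENNReal.ofReal_le_ofReal ?_
      have h := norm_tsum_le_tsum_norm (f := fun k => l (k + K) * b (k + K) x)
        (by simpa only [Real.norm_eq_abs] using htail K)
      simpa only [Real.norm_eq_abs] using h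
    · refine ENNReal.tendsto_sum_nat_add (fun m => ENNReal.ofReal |l m * b m x|) ?_
      rw [← ENNReal.ofReal_tsum_of_nonneg (fun _ => abs_nonneg _) habs]
      exact ENNReal.ofReal_ne_top
  -- the sets and pieces
  set B : ℕ → Set (Fin n → ℝ) := fun K => {x | G K x ≤ 1} with hBdef
  have hBmeas : ∀ K, MeasurableSet (B K) :=
    fun K => measurableSet_le (hGmeas K) measurable_const
  set P1 : ℕ → (Fin n → ℝ) → ℝ := fun K => (F ∩ (B K)ᶜ).indicator f with hP1def
  set P2 : ℕ → (Fin n → ℝ) → ℝ := fun K => (F ∩ B K).indicator (g K) with hP2def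
  have hP1meas : ∀ K, Measurable (P1 K) :=
    fun K => hf.indicator (hFmeas.inter (hBmeas K).compl)
  have hP2meas : ∀ K, Measurable (P2 K) :=
    fun K => (hgmeas K).indicator (hFmeas.inter (hBmeas K))
  -- convergence of the two error integrals
  have h1 : Tendsto (fun K => ∫⁻ x, ENNReal.ofReal (|P1 K x| ^ conjExp q)) atTop (𝓝 0) := by
    have hlim := tendsto_lintegral_of_dominated_convergence (μ := volume)
      (F := fun K x => ENNReal.ofReal (|P1 K x| ^ conjExp q)) (f := fun _ => 0)
      (bound := fun x => ENNReal.ofReal (|f x| ^ conjExp q))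
      (fun K => meas_ofReal_abs_rpow (hP1meas K) _ hqc.le)
      (fun K => Filter.Eventually.of_forall fun x => ?_) hLq.ne ?_
    · simpa using hlim
    · refine ENNReal.ofReal_le_ofReal (Real.rpow_le_rpow (abs_nonneg _) ?_ hqc.le)
      by_cases hx : x ∈ F ∩ (B K)ᶜ
      · rw [hP1def]; simp only []
        rw [Set.indicator_of_mem hx]
      · rw [hP1def]; simp only []
        rw [Set.indicator_of_notMem hx, abs_zero]
        exact abs_nonneg _
    · filter_upwards [hA] with x hx
      obtain ⟨-, -, hxt⟩ := hx
      have hev : ∀ᶠ K in atTop, ENNReal.ofReal (|P1 K x| ^ conjExp q) = 0 := by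
        filter_upwards [ENNReal.tendsto_nhds_zero.mp hxt 1 (by norm_num)] with K hK
        have hxB : x ∈ B K := hK
        have hnm : x ∉ F ∩ (B K)ᶜ := fun h => h.2 hxB
        rw [hP1def]; simp only []
        rw [Set.indicator_of_notMem hnm, abs_zero, Real.zero_rpow (ne_of_gt hqc),
          ENNReal.ofReal_zero]
      exact Tendsto.congr' (hev.mono fun K h => h.symm) tendsto_const_nhds
  have h2 : Tendsto (fun K => ∫⁻ x, ENNReal.ofReal (|P2 K x| ^ conjExp q)) atTop (𝓝 0) := by
    have hlim := tendsto_lintegral_of_dominated_convergence (μ := volume)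
      (F := fun K x => ENNReal.ofReal (|P2 K x| ^ conjExp q)) (f := fun _ => 0)
      (bound := F.indicator fun _ => (1:ℝ≥0∞))
      (fun K => meas_ofReal_abs_rpow (hP2meas K) _ hqc.le) ?_ ?_ ?_
    · simpa using hlim
    · intro K
      filter_upwards [hA] with x hx
      obtain ⟨hxb, -, -⟩ := hx
      by_cases hmem : x ∈ F ∩ B K
      · have hG1 : G K x ≤ 1 := hmem.2
        have habs1 : |g K x| ≤ 1 := ENNReal.ofReal_le_one.mp ((hxb K).trans hG1)
        rw [hP2def]; simp only []
        rw [Set.indicator_of_mem hmem, Set.indicator_of_mem hmem.1]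
        exact ENNReal.ofReal_le_one.mpr (Real.rpow_le_one (abs_nonneg _) habs1 hqc.le)
      · rw [hP2def]; simp only []
        rw [Set.indicator_of_notMem hmem, abs_zero, Real.zero_rpow (ne_of_gt hqc),
          ENNReal.ofReal_zero]
        exact zero_le
    · rw [lintegral_indicator hFmeas]
      simpa using hFvol
    · filter_upwards [hA] with x hx
      obtain ⟨hxb, hxne, hxt⟩ := hx
      have hr : Tendsto (fun K => (G K x).toReal) atTop (𝓝 0) := by
        have h := (ENNReal.tendsto_toReal (a := 0) (by simp)).comp hxt
        simpa [Function.comp_def] using h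
      have habs : ∀ K, |P2 K x| ≤ (G K x).toReal := by
        intro K
        by_cases hmem : x ∈ F ∩ B K
        · rw [hP2def]; simp only []
          rw [Set.indicator_of_mem hmem]
          exact (ENNReal.ofReal_le_iff_le_toReal (hxne K)).mp (hxb K)
        · rw [hP2def]; simp only []
          rw [Set.indicator_of_notMem hmem, abs_zero]
          exact ENNReal.toReal_nonneg
      have h0 : Tendsto (fun K => |P2 K x|) atTop (𝓝 0) :=
        squeeze_zero (fun K => abs_nonneg _) habs hr
      have h1' : Tendsto (fun K => |P2 K x| ^ conjExp q) atTop (𝓝 0) := by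
        have hc := (Real.continuous_rpow_const hqc.le).tendsto 0
        have := hc.comp h0
        simpa [Function.comp_def, Real.zero_rpow (ne_of_gt hqc)] using this
      have := (ENNReal.continuous_ofReal.tendsto 0).comp h1'
      simpa [Function.comp_def] using this
  -- choice of the cutoff
  set ν := blockNorm n p q f with hνdef
  set Cst : ℝ≥0∞ := ENNReal.ofReal ((s₀ ^ n) ^ ((1:ℝ) / q - 1 / p)) with hCstdef
  have hsn : (0:ℝ) < s₀ ^ n := pow_pos hs₀ n
  have hCst0 : Cst ≠ 0 := by
    simp only [hCstdef, ne_eq, ENNReal.ofReal_eq_zero, not_le]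
    positivity
  have hCsttop : Cst ≠ ⊤ := ENNReal.ofReal_ne_top
  have hdivtop : ν / Cst ≠ ⊤ := by
    simp only [ne_eq, ENNReal.div_eq_top, not_or, not_and_or]
    exact ⟨Or.inr (fun h => hCst0 h), Or.inl hνtop⟩
  have hdiv0 : ν / Cst ≠ 0 := by
    simp only [ne_eq, ENNReal.div_eq_zero_iff, not_or]
    exact ⟨hν0, hCsttop⟩
  set ε : ℝ≥0∞ := (ν / Cst) ^ conjExp q with hεdef
  have hε0 : 0 < ε := ENNReal.rpow_pos (pos_iff_ne_zero.mpr hdiv0) hdivtop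
  have hεtop : ε ≠ ⊤ := ENNReal.rpow_ne_top_of_nonneg hqc.le hdivtop
  obtain ⟨K, hK1, hK2⟩ := ((ENNReal.tendsto_nhds_zero.mp h1 ε hε0).and
    (ENNReal.tendsto_nhds_zero.mp h2 ε hε0)).exists
  have hsmall : ∀ I : ℝ≥0∞, I ≤ ε → I ^ (1 / conjExp q) * Cst ≤ ν := by
    intro I hI
    have h1' : I ^ (1 / conjExp q) ≤ ν / Cst := by
      calc I ^ (1 / conjExp q) ≤ ε ^ (1 / conjExp q) :=
            ENNReal.rpow_le_rpow hI (by positivity)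
        _ = ν / Cst := by
            rw [hεdef, ← ENNReal.rpow_mul, mul_one_div, div_self (ne_of_gt hqc),
              ENNReal.rpow_one]
    calc I ^ (1 / conjExp q) * Cst ≤ ν / Cst * Cst := mul_le_mul_left h1' Cst
      _ = ν := ENNReal.div_mul_cancel hCst0 hCsttop
  -- scale the two pieces into blocks
  have hP1supp : Function.support (P1 K) ⊆ cube n a₀ s₀ := by
    intro x hx
    exact hFsub (Set.support_indicator_subset hx).1
  have hP2supp : Function.support (P2 K) ⊆ cube n a₀ s₀ := by
    intro x hx
    exact hFsub (Set.support_indicator_subset hx).1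
  have hI1fin : (∫⁻ x, ENNReal.ofReal (|P1 K x| ^ conjExp q)) ≠ ⊤ :=
    ne_top_of_le_ne_top hεtop hK1
  have hI2fin : (∫⁻ x, ENNReal.ofReal (|P2 K x| ^ conjExp q)) ≠ ⊤ :=
    ne_top_of_le_ne_top hεtop hK2
  obtain ⟨μ₁, c₁, hμ₁0, hc₁, heq₁, hbd₁⟩ :=
    blockScale n p q hq (P1 K) (hP1meas K) a₀ s₀ hs₀ hP1supp hI1fin
  obtain ⟨μ₂, c₂, hμ₂0, hc₂, heq₂, hbd₂⟩ :=
    blockScale n p q hq (P2 K) (hP2meas K) a₀ s₀ hs₀ hP2supp hI2fin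
  have hμ₁ν : ENNReal.ofReal μ₁ ≤ ν := hbd₁.trans (hsmall _ hK1)
  have hμ₂ν : ENNReal.ofReal μ₂ ≤ ν := hbd₂.trans (hsmall _ hK2)
  -- the head blocks
  set S := F ∩ B K with hSdef
  have hSmeas : MeasurableSet S := hFmeas.inter (hBmeas K)
  set σ : ℕ → ℝ := fun k => if 0 ≤ l k then (1:ℝ) else -1 with hσdef
  have hσabs : ∀ k, |σ k| ≤ 1 := by
    intro k; by_cases h : 0 ≤ l k <;> simp [hσdef, h]
  set ch : ℕ → (Fin n → ℝ) → ℝ := fun k => S.indicator fun x => σ k * b k x with hchdef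
  have hchblock : ∀ k, IsBlock n p q (ch k) :=
    fun k => IsBlock.indicator_sign hq (hblocks k) S hSmeas (σ k) (hσabs k)
  have hchid : ∀ k x, |l k| * ch k x = l k * S.indicator (b k) x := by
    intro k x
    by_cases hx : x ∈ S
    · rw [hchdef]; simp only []
      rw [Set.indicator_of_mem hx, Set.indicator_of_mem hx, hσdef]
      by_cases h : 0 ≤ l k
      · simp [h, abs_of_nonneg h]
      · push_neg at h
        simp only [if_neg (not_le.mpr h), abs_of_neg h]
        ring
    · rw [hchdef]; simp only []
      rw [Set.indicator_of_notMem hx, Set.indicator_of_notMem hx]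
      ring
  -- assembly
  refine ⟨K + 1 + 1, Fin.snoc (Fin.snoc (fun j : Fin K => |l j|) μ₁) μ₂,
    Fin.snoc (Fin.snoc (fun j : Fin K => ch j) c₁) c₂, ?_, ?_, ?_⟩
  · intro j
    refine Fin.lastCases ?_ (fun i => ?_) j
    · simp only [Fin.snoc_last]
      exact ⟨hμ₂0, hc₂⟩
    · refine Fin.lastCases ?_ (fun i' => ?_) i
      · simp only [Fin.snoc_castSucc, Fin.snoc_last]
        exact ⟨hμ₁0, hc₁⟩
      · simp only [Fin.snoc_castSucc]
        exact ⟨abs_nonneg _, hchblock i'⟩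
  · filter_upwards [heq₁, heq₂] with x hx₁ hx₂
    rw [Fin.sum_univ_castSucc]
    simp only [Fin.snoc_castSucc, Fin.snoc_last]
    rw [Fin.sum_univ_castSucc]
    simp only [Fin.snoc_castSucc, Fin.snoc_last]
    rw [← hx₁, ← hx₂]
    have hhead : (∑ i : Fin K, |l i.val| * ch i.val x)
        = ∑ k ∈ Finset.range K, l k * S.indicator (b k) x := by
      rw [Fin.sum_univ_eq_sum_range (fun i => |l i| * ch i x) K]
      exact Finset.sum_congr rfl fun k _ => hchid k x
    rw [hhead]
    by_cases hxF : x ∈ F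
    · by_cases hxB : x ∈ B K
      · have hxS : x ∈ S := ⟨hxF, hxB⟩
        have hxP1 : x ∉ F ∩ (B K)ᶜ := fun h => h.2 hxB
        rw [hP1def, hP2def]; simp only []
        rw [Set.indicator_of_notMem hxP1, Set.indicator_of_mem hxS]
        rw [hgdef]; simp only []
        have : (∑ k ∈ Finset.range K, l k * S.indicator (b k) x)
            = ∑ k ∈ Finset.range K, l k * b k x :=
          Finset.sum_congr rfl fun k _ => by rw [Set.indicator_of_mem hxS]
        rw [this]
        ring
      · have hxS : x ∉ S := fun h => hxB h.2
        have hxP1 : x ∈ F ∩ (B K)ᶜ := ⟨hxF, hxB⟩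
        rw [hP1def, hP2def]; simp only []
        rw [Set.indicator_of_mem hxP1, Set.indicator_of_notMem hxS]
        have : (∑ k ∈ Finset.range K, l k * S.indicator (b k) x) = 0 := by
          refine Finset.sum_eq_zero fun k _ => ?_
          rw [Set.indicator_of_notMem hxS, mul_zero]
        rw [this]
        ring
    · have hxS : x ∉ S := fun h => hxF h.1
      have hxP1 : x ∉ F ∩ (B K)ᶜ := fun h => hxF h.1
      have hxP2 : x ∉ F ∩ B K := fun h => hxF h.1
      rw [hP1def, hP2def]; simp only []
      rw [Set.indicator_of_notMem hxP1, Set.indicator_of_notMem hxP2]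
      have : (∑ k ∈ Finset.range K, l k * S.indicator (b k) x) = 0 := by
        refine Finset.sum_eq_zero fun k _ => ?_
        rw [Set.indicator_of_notMem hxS, mul_zero]
      rw [this]
      have : f x = 0 := image_eq_zero_of_notMem_tsupport hxF
      rw [this]
      ring
  · rw [Fin.sum_univ_castSucc]
    simp only [Fin.snoc_castSucc, Fin.snoc_last]
    rw [Fin.sum_univ_castSucc]
    simp only [Fin.snoc_castSucc, Fin.snoc_last]
    have hhead : (∑ i : Fin K, |l i.val|) ≤ ∑' k, |l k| := by
      rw [Fin.sum_univ_eq_sum_range (fun i => |l i|) K]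
      exact Summable.sum_le_tsum (Finset.range K) (fun i _ => abs_nonneg _) hsum
    calc ENNReal.ofReal ((∑ i : Fin K, |l i.val|) + μ₁ + μ₂)
        ≤ ENNReal.ofReal ((∑ i : Fin K, |l i.val|) + μ₁) + ENNReal.ofReal μ₂ :=
          ENNReal.ofReal_add_le
      _ ≤ ENNReal.ofReal (∑ i : Fin K, |l i.val|) + ENNReal.ofReal μ₁ +
            ENNReal.ofReal μ₂ := add_le_add_left ENNReal.ofReal_add_le _
      _ ≤ ENNReal.ofReal (∑' k, |l k|) + ν + ν :=
          add_le_add (add_le_add (ENNReal.ofReal_le_ofReal hhead) hμ₁ν) hμ₂ν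
      _ ≤ 2 * ν + ν + ν := add_le_add (add_le_add hval.le le_rfl) le_rfl
      _ = 4 * ν := by ring
      _ ≤ 8 * ν := mul_le_mul_left (by norm_num) ν
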